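/- Theorem (edge differences vanish on regular graphs): In the regular-graph group-interaction model, assume α_i(t) = α_t for all i and t with liminf_{t→∞} α_t < 1, assume 3|N_i^s ∩ N_j^s| > 2r for every edge (i,j) of G, and assume the profile at some time s equals G, i.e. ‖x_i(s) − x_j(s)‖ ≤ ε for every edge (i,j). Then sup over edges (i,j) of ‖x_i(t) − x_j(t)‖ tends to 0 as t → ∞. In particular, if G is connected, ‖x_i(t) − x_j(t)‖ → 0 for all vertices i, j. -/

import Mathlib

open Finset
open scoped Classical

/-- The closed social neighborhood `N_i^s = {i} ∪ {j : (i,j) ∈ E}` of vertex `i`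
in a locally finite simple graph `G` on `ℤ⁺`. -/
noncomputable def closedNbhd (G : SimpleGraph ℕ+) [∀ v, Fintype (G.neighborSet v)]
    (i : ℕ+) : Finset ℕ+ :=
  insert i (G.neighborFinset i)

/-- The update neighborhood under group interaction:
`N_i(t) = {j : j = i, or (i,j) ∈ E and ‖x_i(t) − x_j(t)‖ ≤ ε}`. -/
noncomputable def updNbhd {d : ℕ} (G : SimpleGraph ℕ+) [∀ v, Fintype (G.neighborSet v)]
    (ε : ℝ) (x : ℕ → ℕ+ → EuclideanSpace ℝ (Fin d)) (t : ℕ) (i : ℕ+) : Finset ℕ+ :=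
  (closedNbhd G i).filter fun j => j = i ∨ (G.Adj i j ∧ ‖x t i - x t j‖ ≤ ε)

lemma mem_closedNbhd_iff (G : SimpleGraph ℕ+) [∀ v, Fintype (G.neighborSet v)]
    {i j : ℕ+} : j ∈ closedNbhd G i ↔ j = i ∨ G.Adj i j := by
  unfold closedNbhd
  simp [SimpleGraph.mem_neighborFinset]

lemma closedNbhd_card (G : SimpleGraph ℕ+) [∀ v, Fintype (G.neighborSet v)]
    (r : ℕ) (hr : 1 ≤ r) (hreg : ∀ i, G.degree i = r - 1) (i : ℕ+) :
    (closedNbhd G i).card = r := by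
  unfold closedNbhd
  rw [Finset.card_insert_of_notMem (G.notMem_neighborFinset_self i),
    G.card_neighborFinset_eq_degree, hreg]
  omega

lemma walk_bound {E : Type*} [SeminormedAddCommGroup E]
    (G : SimpleGraph ℕ+) (f : ℕ+ → E) (C : ℝ)
    (hC : ∀ a b : ℕ+, G.Adj a b → ‖f a - f b‖ ≤ C) :
    ∀ {i j : ℕ+} (w : G.Walk i j), ‖f i - f j‖ ≤ w.length * C := by
  intro i j w
  induction w with
  | nil => simp
  | @cons a m c h p ih =>
    have h1 : ‖f a - f c‖ ≤ ‖f a - f m‖ + ‖f m - f c‖ :=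
      norm_sub_le_norm_sub_add_norm_sub _ _ _
    have h2 : ‖f a - f m‖ ≤ C := hC _ _ h
    have h3 : ((SimpleGraph.Walk.cons h p).length : ℝ) = (p.length : ℝ) + 1 := by
      rw [SimpleGraph.Walk.length_cons]; push_cast; ring
    rw [h3]
    linarith

lemma step_contract {d r : ℕ} (hr : 1 ≤ r) (ε : ℝ)
    (G : SimpleGraph ℕ+) [∀ v, Fintype (G.neighborSet v)] [DecidableRel G.Adj]
    (hreg : ∀ i, G.degree i = r - 1)
    (hcommon : ∀ i j, G.Adj i j → 2 * r < 3 * (closedNbhd G i ∩ closedNbhd G j).card)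
    (x : ℕ → ℕ+ → EuclideanSpace ℝ (Fin d)) (α : ℕ → ℝ) (t : ℕ)
    (hα0 : 0 ≤ α t) (hα1 : α t ≤ 1)
    (hdyn : ∀ i, x (t + 1) i =
      α t • x t i + ((1 - α t) / ((updNbhd G ε x t i).card : ℝ)) •
        ∑ k ∈ updNbhd G ε x t i, x t k)
    (b : ℝ) (hb0 : 0 ≤ b) (hbε : b ≤ ε)
    (H : ∀ i j, G.Adj i j → ‖x t i - x t j‖ ≤ b) :
    ∀ i j, G.Adj i j →
      ‖x (t + 1) i - x (t + 1) j‖ ≤ (α t + (1 - α t) * (((r : ℝ) - 1) / r)) * b := by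
  have hrpos : (0 : ℝ) < r := by exact_mod_cast hr
  have hupd : ∀ i, updNbhd G ε x t i = closedNbhd G i := by
    intro i
    unfold updNbhd
    ext j
    simp only [Finset.mem_filter]
    constructor
    · exact fun h => h.1
    · intro hj
      refine ⟨hj, ?_⟩
      rcases (mem_closedNbhd_iff G).1 hj with h | h
      · exact Or.inl h
      · exact Or.inr ⟨h, (H i j h).trans hbε⟩
  intro i j hij
  set A := closedNbhd G i with hA
  set B := closedNbhd G j with hB
  have hAcard : A.card = r := closedNbhd_card G r hr hreg i
  have hBcard : B.card = r := closedNbhd_card G r hr hreg j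
  set c := (A ∩ B).card with hc
  have hcA : c ≤ r := by
    rw [← hAcard]; exact Finset.card_le_card Finset.inter_subset_left
  have hm : (A \ B).card = r - c := by
    have := Finset.card_sdiff_add_card_inter A B
    omega
  have hm' : (B \ A).card = r - c := by
    have := Finset.card_sdiff_add_card_inter B A
    rw [Finset.inter_comm] at this
    omega
  have hcom : 2 * r + 1 ≤ 3 * c := hcommon i j hij
  have hmR : ((r - c : ℕ) : ℝ) = (r : ℝ) - c := by
    push_cast [Nat.cast_sub hcA]; ring
  have h3m : 3 * ((r - c : ℕ) : ℝ) ≤ (r : ℝ) - 1 := by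
    rw [hmR]
    have : (2 * (r : ℝ) + 1) ≤ 3 * c := by exact_mod_cast hcom
    linarith
  -- split sums
  have hsplit : ∀ S T : Finset ℕ+,
      ∑ k ∈ S, x t k = ∑ k ∈ S \ T, x t k + ∑ k ∈ S ∩ T, x t k := by
    intro S T
    rw [← Finset.sum_union (Finset.disjoint_sdiff_inter S T), Finset.sdiff_union_inter]
  have hside : ∀ (S : Finset ℕ+) (v : ℕ+),
      ∑ k ∈ S, x t k = (∑ k ∈ S, (x t k - x t v)) + S.card • x t v := by
    intro S v
    rw [Finset.sum_sub_distrib, Finset.sum_const]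
    abel
  have e1 : x (t + 1) i - x (t + 1) j =
      α t • (x t i - x t j) +
        ((1 - α t) / (r : ℝ)) • (∑ k ∈ A, x t k - ∑ k ∈ B, x t k) := by
    rw [hdyn i, hdyn j, hupd i, hupd j, ← hA, ← hB, hAcard, hBcard, smul_sub, smul_sub]
    abel
  have e2 : ∑ k ∈ A, x t k - ∑ k ∈ B, x t k =
      (∑ k ∈ A \ B, (x t k - x t i)) - (∑ k ∈ B \ A, (x t k - x t j)) +
        (r - c : ℕ) • (x t i - x t j) := by
    rw [hsplit A B, hsplit B A, Finset.inter_comm B A,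
      hside (A \ B) i, hside (B \ A) j, hm, hm', smul_sub]
    abel
  -- norm bounds
  have hboundA : ‖∑ k ∈ A \ B, (x t k - x t i)‖ ≤ ((r - c : ℕ) : ℝ) * b := by
    refine (norm_sum_le _ _).trans ?_
    rw [← hm]
    have := Finset.sum_le_card_nsmul (A \ B) (fun k => ‖x t k - x t i‖) b ?_
    · simpa [nsmul_eq_mul] using this
    · intro k hk
      rcases (mem_closedNbhd_iff G).1 (Finset.mem_sdiff.1 hk).1 with h | h
      · simp [h, hb0]
      · show ‖x t k - x t i‖ ≤ b
        rw [norm_sub_rev]; exact H i k h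
  have hboundB : ‖∑ k ∈ B \ A, (x t k - x t j)‖ ≤ ((r - c : ℕ) : ℝ) * b := by
    refine (norm_sum_le _ _).trans ?_
    rw [← hm']
    have := Finset.sum_le_card_nsmul (B \ A) (fun k => ‖x t k - x t j‖) b ?_
    · simpa [nsmul_eq_mul] using this
    · intro k hk
      rcases (mem_closedNbhd_iff G).1 (Finset.mem_sdiff.1 hk).1 with h | h
      · simp [h, hb0]
      · show ‖x t k - x t j‖ ≤ b
        rw [norm_sub_rev]; exact H j k h
  have hboundC : ‖(r - c : ℕ) • (x t i - x t j)‖ ≤ ((r - c : ℕ) : ℝ) * b := by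
    refine norm_nsmul_le.trans ?_
    exact mul_le_mul_of_nonneg_left (H i j hij) (Nat.cast_nonneg _)
  have hvnorm : ‖∑ k ∈ A, x t k - ∑ k ∈ B, x t k‖ ≤ 3 * ((r - c : ℕ) : ℝ) * b := by
    rw [e2]
    calc ‖(∑ k ∈ A \ B, (x t k - x t i)) - (∑ k ∈ B \ A, (x t k - x t j)) +
          (r - c : ℕ) • (x t i - x t j)‖
        ≤ ‖(∑ k ∈ A \ B, (x t k - x t i)) - (∑ k ∈ B \ A, (x t k - x t j))‖ +
          ‖(r - c : ℕ) • (x t i - x t j)‖ := norm_add_le _ _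
      _ ≤ (‖∑ k ∈ A \ B, (x t k - x t i)‖ + ‖∑ k ∈ B \ A, (x t k - x t j)‖) +
          ‖(r - c : ℕ) • (x t i - x t j)‖ := by
            have := norm_sub_le (∑ k ∈ A \ B, (x t k - x t i))
              (∑ k ∈ B \ A, (x t k - x t j))
            linarith
      _ ≤ 3 * ((r - c : ℕ) : ℝ) * b := by linarith
  have hfac : (0 : ℝ) ≤ (1 - α t) / r := div_nonneg (by linarith) hrpos.le
  calc ‖x (t + 1) i - x (t + 1) j‖
      = ‖α t • (x t i - x t j) +
          ((1 - α t) / (r : ℝ)) • (∑ k ∈ A, x t k - ∑ k ∈ B, x t k)‖ := by rw [e1]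
    _ ≤ ‖α t • (x t i - x t j)‖ +
          ‖((1 - α t) / (r : ℝ)) • (∑ k ∈ A, x t k - ∑ k ∈ B, x t k)‖ := norm_add_le _ _
    _ = α t * ‖x t i - x t j‖ +
          ((1 - α t) / (r : ℝ)) * ‖∑ k ∈ A, x t k - ∑ k ∈ B, x t k‖ := by
            rw [norm_smul, norm_smul, Real.norm_eq_abs, Real.norm_eq_abs,
              abs_of_nonneg hα0, abs_of_nonneg hfac]
    _ ≤ α t * b + ((1 - α t) / (r : ℝ)) * (((r : ℝ) - 1) * b) := by
        have h1 : α t * ‖x t i - x t j‖ ≤ α t * b :=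
          mul_le_mul_of_nonneg_left (H i j hij) hα0
        have h2 : ((1 - α t) / (r : ℝ)) * ‖∑ k ∈ A, x t k - ∑ k ∈ B, x t k‖ ≤
            ((1 - α t) / (r : ℝ)) * (((r : ℝ) - 1) * b) := by
          apply mul_le_mul_of_nonneg_left _ hfac
          refine hvnorm.trans ?_
          have : 3 * ((r - c : ℕ) : ℝ) * b ≤ ((r : ℝ) - 1) * b :=
            mul_le_mul_of_nonneg_right h3m hb0
          linarith
        linarith
    _ = (α t + (1 - α t) * (((r : ℝ) - 1) / r)) * b := by ring

theorem edge_differences_vanish (d r : ℕ) (hd : 1 ≤ d) (hr : 1 ≤ r)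
    (ε : ℝ) (hε : 0 < ε)
    (G : SimpleGraph ℕ+) [∀ v, Fintype (G.neighborSet v)] [DecidableRel G.Adj]
    (hreg : ∀ i, G.degree i = r - 1)
    (x : ℕ → ℕ+ → EuclideanSpace ℝ (Fin d)) (α : ℕ → ℝ)
    (hα : ∀ t, α t ∈ Set.Icc (0 : ℝ) 1)
    (hliminf : Filter.liminf α Filter.atTop < 1)
    (hcommon : ∀ i j, G.Adj i j →
      2 * r < 3 * (closedNbhd G i ∩ closedNbhd G j).card)
    (hdyn : ∀ t i, x (t + 1) i =
      α t • x t i + ((1 - α t) / ((updNbhd G ε x t i).card : ℝ)) •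
        ∑ k ∈ updNbhd G ε x t i, x t k)
    (s : ℕ) (hprof : ∀ i j, G.Adj i j → ‖x s i - x s j‖ ≤ ε) :
    Filter.Tendsto
      (fun t => ⨆ p : {p : ℕ+ × ℕ+ // G.Adj p.1 p.2},
        ‖x t p.val.1 - x t p.val.2‖) Filter.atTop (nhds 0) ∧
    (G.Connected → ∀ i j : ℕ+,
      Filter.Tendsto (fun t => ‖x t i - x t j‖) Filter.atTop (nhds 0)) := by
  by_cases hne : Nonempty {p : ℕ+ × ℕ+ // G.Adj p.1 p.2}
  case neg =>
    haveI hE : IsEmpty {p : ℕ+ × ℕ+ // G.Adj p.1 p.2} := not_nonempty_iff.1 hne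
    have hnoadj : ∀ a b : ℕ+, ¬ G.Adj a b := fun a b h => hE.elim ⟨(a, b), h⟩
    constructor
    · have heq : (fun t => ⨆ p : {p : ℕ+ × ℕ+ // G.Adj p.1 p.2},
          ‖x t p.val.1 - x t p.val.2‖) = fun _ => (0 : ℝ) :=
        funext fun t => Real.iSup_of_isEmpty _
      rw [heq]
      exact tendsto_const_nhds
    · intro hconn i j
      exfalso
      have key : ∀ {a c : ℕ+} (_ : G.Walk a c), a = c := by
        intro a c w
        induction w with
        | nil => rfl
        | cons h p ih => exact absurd h (hnoadj _ _)
      exact absurd (key (hconn.preconnected 1 2).some) (by decide)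
  case pos =>
    -- setup
    set θ : ℝ := ((r : ℝ) - 1) / r with hθdef
    have hrpos : (0 : ℝ) < r := by exact_mod_cast hr
    have hθ0 : 0 ≤ θ := by
      apply div_nonneg _ hrpos.le
      have : (1 : ℝ) ≤ r := by exact_mod_cast hr
      linarith
    have hθ1 : θ < 1 := by
      rw [div_lt_one hrpos]; linarith
    set lam : ℕ → ℝ := fun t => α t + (1 - α t) * θ with hlamdef
    have hlam0 : ∀ t, 0 ≤ lam t := by
      intro t
      have h1 := (hα t).1; have h2 := (hα t).2
      have : 0 ≤ (1 - α t) * θ := mul_nonneg (by linarith) hθ0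
      simp only [hlamdef]; linarith
    have hlam1 : ∀ t, lam t ≤ 1 := by
      intro t
      have h1 := (hα t).1; have h2 := (hα t).2
      have : (1 - α t) * θ ≤ (1 - α t) * 1 := mul_le_mul_of_nonneg_left hθ1.le (by linarith)
      simp only [hlamdef]; linarith
    let b : ℕ → ℝ := fun n => Nat.rec ε (fun k bk => lam (s + k) * bk) n
    have hb0 : b 0 = ε := rfl
    have hbS : ∀ n, b (n + 1) = lam (s + n) * b n := fun n => rfl
    have hbnonneg : ∀ n, 0 ≤ b n := by
      intro n
      induction n with
      | zero => exact hε.le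
      | succ k ih => rw [hbS]; exact mul_nonneg (hlam0 _) ih
    have hbstep : ∀ n, b (n + 1) ≤ b n := by
      intro n
      rw [hbS]
      calc lam (s + n) * b n ≤ 1 * b n :=
            mul_le_mul_of_nonneg_right (hlam1 _) (hbnonneg n)
        _ = b n := one_mul _
    have hbmono : ∀ {m n : ℕ}, m ≤ n → b n ≤ b m := by
      intro m n h
      induction n with
      | zero => simp_all
      | succ k ih =>
        rcases Nat.lt_or_ge m (k + 1) with h' | h'
        · exact (hbstep k).trans (ih (Nat.lt_succ_iff.1 h'))
        · have : m = k + 1 := le_antisymm h h'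
          subst this; exact le_refl _
    have hbε : ∀ n, b n ≤ ε := fun n => hb0 ▸ hbmono (Nat.zero_le n)
    -- main induction
    have key : ∀ n, ∀ i j, G.Adj i j → ‖x (s + n) i - x (s + n) j‖ ≤ b n := by
      intro n
      induction n with
      | zero => exact hprof
      | succ k ih =>
        have step := step_contract hr ε G hreg hcommon x α (s + k)
          (hα (s + k)).1 (hα (s + k)).2 (hdyn (s + k)) (b k) (hbnonneg k) (hbε k) ih
        intro i j hij
        have : s + (k + 1) = (s + k) + 1 := by omega
        rw [this, hbS]
        exact step i j hij
    -- the sup function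
    set D : ℕ → ℝ := fun t => ⨆ p : {p : ℕ+ × ℕ+ // G.Adj p.1 p.2},
      ‖x t p.val.1 - x t p.val.2‖ with hDdef
    have hbdd : ∀ t, s ≤ t → BddAbove (Set.range fun p : {p : ℕ+ × ℕ+ // G.Adj p.1 p.2} =>
        ‖x t p.val.1 - x t p.val.2‖) := by
      intro t ht
      refine ⟨b (t - s), Set.forall_mem_range.2 fun p => ?_⟩
      have h := key (t - s) p.val.1 p.val.2 p.2
      have hts : s + (t - s) = t := by omega
      rwa [hts] at h
    have hDle : ∀ t, s ≤ t → D t ≤ b (t - s) := by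
      intro t ht
      apply ciSup_le
      intro p
      have h := key (t - s) p.val.1 p.val.2 p.2
      have hts : s + (t - s) = t := by omega
      rwa [hts] at h
    have hedgeD : ∀ t, s ≤ t → ∀ a c : ℕ+, G.Adj a c → ‖x t a - x t c‖ ≤ D t := by
      intro t ht a c hac
      exact le_ciSup (hbdd t ht) (⟨(a, c), hac⟩ : {p : ℕ+ × ℕ+ // G.Adj p.1 p.2})
    have hD0 : ∀ t, s ≤ t → 0 ≤ D t := by
      intro t ht
      obtain ⟨p⟩ := hne
      exact (norm_nonneg _).trans (hedgeD t ht p.val.1 p.val.2 p.2)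
    -- tendsto of b
    have hβex : ∃ β : ℝ, 0 ≤ β ∧ β < 1 ∧ Filter.liminf α Filter.atTop < β := by
      refine ⟨max 0 ((1 + Filter.liminf α Filter.atTop) / 2), le_max_left _ _, ?_, ?_⟩
      · exact max_lt one_pos (by linarith)
      · exact lt_of_lt_of_le (by linarith) (le_max_right _ _)
    obtain ⟨β, hβ0, hβ1, hβlim⟩ := hβex
    have hcob : Filter.IsCoboundedUnder (· ≥ ·) Filter.atTop α :=
      Filter.isCoboundedUnder_ge_of_eventually_le Filter.atTop
        (Filter.Eventually.of_forall fun t => (hα t).2)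
    have hfreq : ∀ N : ℕ, ∃ t, N ≤ t ∧ α t < β := by
      have h := Filter.frequently_lt_of_liminf_lt hcob hβlim
      intro N
      obtain ⟨t, ht, ht'⟩ := (Filter.frequently_atTop.1 h) N
      exact ⟨t, ht, ht'⟩
    set μ : ℝ := β + (1 - β) * θ with hμdef
    have hμ0 : 0 ≤ μ := by
      have : 0 ≤ (1 - β) * θ := mul_nonneg (by linarith) hθ0
      simp only [hμdef]; linarith
    have hμ1 : μ < 1 := by
      have : (1 - β) * θ < (1 - β) * 1 := by
        apply mul_lt_mul_of_pos_left hθ1 (by linarith)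
      simp only [hμdef]; linarith
    have hlamμ : ∀ t, α t < β → lam t ≤ μ := by
      intro t ht
      have h1 : lam t = θ + α t * (1 - θ) := by simp only [hlamdef]; ring
      have h2 : μ = θ + β * (1 - θ) := by simp only [hμdef]; ring
      rw [h1, h2]
      have : α t * (1 - θ) ≤ β * (1 - θ) :=
        mul_le_mul_of_nonneg_right ht.le (by linarith)
      linarith
    have claim : ∀ m : ℕ, ∃ n, b n ≤ μ ^ m * ε := by
      intro m
      induction m with
      | zero => exact ⟨0, by simp [hb0]⟩
      | succ k ih =>
        obtain ⟨n, hn⟩ := ih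
        obtain ⟨t, ht, ht'⟩ := hfreq (s + n)
        refine ⟨(t - s) + 1, ?_⟩
        have hts : s + (t - s) = t := by omega
        have h1 : b ((t - s) + 1) = lam t * b (t - s) := by
          rw [hbS, hts]
        have h2 : lam t * b (t - s) ≤ μ * b (t - s) :=
          mul_le_mul_of_nonneg_right (hlamμ t ht') (hbnonneg _)
        have h3 : b (t - s) ≤ b n := hbmono (by omega)
        have h4 : μ * b (t - s) ≤ μ * b n := mul_le_mul_of_nonneg_left h3 hμ0
        have h5 : μ * b n ≤ μ * (μ ^ k * ε) := mul_le_mul_of_nonneg_left hn hμ0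
        calc b ((t - s) + 1) = lam t * b (t - s) := h1
          _ ≤ μ * (μ ^ k * ε) := by linarith
          _ = μ ^ (k + 1) * ε := by ring
    have htb : Filter.Tendsto b Filter.atTop (nhds 0) := by
      rw [Metric.tendsto_atTop]
      intro δ hδ
      have hpow : Filter.Tendsto (fun m : ℕ => μ ^ m * ε) Filter.atTop (nhds 0) := by
        have := (tendsto_pow_atTop_nhds_zero_of_lt_one hμ0 hμ1).mul_const ε
        simpa using this
      obtain ⟨m, hm⟩ := (hpow.eventually (gt_mem_nhds hδ)).exists
      obtain ⟨n, hn⟩ := claim m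
      refine ⟨n, fun k hk => ?_⟩
      have hbk : b k ≤ b n := hbmono hk
      rw [Real.dist_eq, sub_zero, abs_of_nonneg (hbnonneg k)]
      calc b k ≤ b n := hbk
        _ ≤ μ ^ m * ε := hn
        _ < δ := hm
    have hgt : Filter.Tendsto (fun t => b (t - s)) Filter.atTop (nhds 0) :=
      htb.comp (Filter.tendsto_sub_atTop_nat s)
    have hDt : Filter.Tendsto D Filter.atTop (nhds 0) := by
      apply squeeze_zero'
      · exact (Filter.eventually_ge_atTop s).mono fun t ht => hD0 t ht
      · exact (Filter.eventually_ge_atTop s).mono fun t ht => hDle t ht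
      · exact hgt
    refine ⟨hDt, ?_⟩
    intro hconn i j
    obtain ⟨w⟩ := hconn.preconnected i j
    apply squeeze_zero'
    · exact Filter.Eventually.of_forall fun t => norm_nonneg _
    · refine (Filter.eventually_ge_atTop s).mono fun t ht => ?_
      exact walk_bound G (x t) (D t) (fun a c hac => hedgeD t ht a c hac) w
    · simpa using hDt.const_mul (w.length : ℝ)
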